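/- Let s, u ∈ ℂ with s ≠ 0 and u ≠ 0, let A = [[s, 1], [0, s⁻¹]], B = [[s, 0], [−u, s⁻¹]] in SL₂(ℂ), W = B·A⁻¹·B⁻¹·A, W' = A·B⁻¹·A⁻¹·B, x = s + s⁻¹, and z = 2 + (2 − s² − s⁻²)u + u². Let n ≥ 1 be a natural number and suppose the Riley condition S_n(z) = (u² − (u+1)(s² + s⁻² − 3))·S_{n−1}(z) holds and x ∉ {0, 2}. Let L = (W')^n·W^n. Then trace(L) ≠ 2, and ((2 − x)·(P_{n−1}(z) + P_{n−2}(z)) + x·S_{n−1}(z)) / (2 − trace(L)) = ((x − 2)·(P_{n−1}(z) + P_{n−2}(z)) − x·S_{n−1}(z)) · (u⁻²·(u + 1)·(x² − 4) − 1) · x⁻². (The left side is τ_ρ(E_K)/(2 − tr ρ(λ)), the Reidemeister torsion of the manifold obtained by p/q-surgery on the twist knot J(2,2n).) -/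

import Mathlib

open Matrix

set_option maxHeartbeats 1000000

/-- Let `s, u ∈ ℂ` with `s ≠ 0`, `u ≠ 0`, let `A = !![s, 1; 0, s⁻¹]`,
`B = !![s, 0; -u, s⁻¹]`, `W = B * A⁻¹ * B⁻¹ * A`, `W' = A * B⁻¹ * A⁻¹ * B`,
`x = s + s⁻¹`, `z = 2 + (2 - s² - s⁻²)u + u²`. Let `n ≥ 1` be a natural number and
suppose the Riley condition `S n = (u² - (u+1)(s² + s⁻² - 3)) * S (n-1)` holds and
`x ∉ {0, 2}`. Let `L = (W')^n * W^n` (the matrix of the canonical longitude). Then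
`trace L ≠ 2` and
`((2 - x)(P (n-1) + P (n-2)) + x S (n-1)) / (2 - trace L)
  = ((x - 2)(P (n-1) + P (n-2)) - x S (n-1)) * (u⁻²(u+1)(x² - 4) - 1) * x⁻²`.
The left side is `τ_ρ(E_K) / (2 - tr ρ(λ))`, the Reidemeister torsion of the manifold
obtained by `p/q`-surgery on the twist knot `J(2,2n)`. Here `S` denotes the Chebyshev
polynomials of the second kind evaluated at `z` and `P k = ∑_{i=0}^{k} S i` with
`P (-1) = 0`. -/
theorem torsion_dehn_surgery_twist_knot (s u x z : ℂ) (hs : s ≠ 0) (hu : u ≠ 0)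
    (hx : x = s + s⁻¹) (hz : z = 2 + (2 - s ^ 2 - s⁻¹ ^ 2) * u + u ^ 2)
    (S : ℤ → ℂ) (hS0 : S 0 = 1) (hS1 : S 1 = z)
    (hSrec : ∀ k : ℤ, S k = z * S (k - 1) - S (k - 2))
    (P : ℤ → ℂ) (hPneg : P (-1) = 0)
    (hP : ∀ k : ℕ, P (k : ℤ) = ∑ i ∈ Finset.range (k + 1), S (i : ℤ))
    (A B W W' : Matrix (Fin 2) (Fin 2) ℂ)
    (hA : A = !![s, 1; 0, s⁻¹]) (hB : B = !![s, 0; -u, s⁻¹])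
    (hW : W = B * A⁻¹ * B⁻¹ * A) (hW' : W' = A * B⁻¹ * A⁻¹ * B)
    (n : ℕ) (hn : 1 ≤ n)
    (hRiley : S (n : ℤ) = (u ^ 2 - (u + 1) * (s ^ 2 + s⁻¹ ^ 2 - 3)) * S ((n : ℤ) - 1))
    (hx0 : x ≠ 0) (hx2 : x ≠ 2)
    (L : Matrix (Fin 2) (Fin 2) ℂ) (hL : L = W' ^ n * W ^ n) :
    L.trace ≠ 2 ∧
    ((2 - x) * (P ((n : ℤ) - 1) + P ((n : ℤ) - 2)) + x * S ((n : ℤ) - 1)) /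
        (2 - L.trace) =
      ((x - 2) * (P ((n : ℤ) - 1) + P ((n : ℤ) - 2)) - x * S ((n : ℤ) - 1)) *
        (u⁻¹ ^ 2 * (u + 1) * (x ^ 2 - 4) - 1) * x⁻¹ ^ 2 := by
  -- explicit inverses
  have hAinv : A⁻¹ = !![s⁻¹, -1; 0, s] := by
    apply Matrix.inv_eq_right_inv
    rw [hA]
    ext i j
    fin_cases i <;> fin_cases j <;>
      simp [Matrix.mul_apply, Fin.sum_univ_two, Matrix.one_apply] <;> field_simp
  have hBinv : B⁻¹ = !![s⁻¹, 0; u, s] := by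
    apply Matrix.inv_eq_right_inv
    rw [hB]
    ext i j
    fin_cases i <;> fin_cases j <;>
      simp [Matrix.mul_apply, Fin.sum_univ_two, Matrix.one_apply] <;> field_simp <;> ring
  -- explicit W and W'
  have hWe : W = !![1 - s^2*u, s⁻¹ - s*u - s;
      s*u*(u+1) - u*s⁻¹, u*(u+1) - u*s⁻¹^2 + u + 1] := by
    rw [hW, hAinv, hBinv, hA, hB]
    ext i j
    fin_cases i <;> fin_cases j <;>
      (simp [Matrix.mul_apply, Fin.sum_univ_two]; field_simp; ring)
  have hW'e : W' = !![1 + 2*u + u^2 - s^2*u, s - s⁻¹ - u*s⁻¹;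
      u*s⁻¹ - s*u + u^2*s⁻¹, 1 - u*s⁻¹^2] := by
    rw [hW', hAinv, hBinv, hA, hB]
    ext i j
    fin_cases i <;> fin_cases j <;>
      (simp [Matrix.mul_apply, Fin.sum_univ_two]; field_simp; ring)
  -- Cayley-Hamilton for W and W'
  have hWsq : W * W = z • W - 1 := by
    rw [hWe, hz]
    ext i j
    fin_cases i <;> fin_cases j <;>
      (simp [Matrix.mul_apply, Fin.sum_univ_two, Matrix.smul_apply,
        Matrix.sub_apply, Matrix.one_apply, smul_eq_mul];
       field_simp; ring)
  have hW'sq : W' * W' = z • W' - 1 := by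
    rw [hW'e, hz]
    ext i j
    fin_cases i <;> fin_cases j <;>
      (simp [Matrix.mul_apply, Fin.sum_univ_two, Matrix.smul_apply,
        Matrix.sub_apply, Matrix.one_apply, smul_eq_mul];
       field_simp; ring)
  -- S(-1) = 0
  have hSm1 : S (-1) = 0 := by
    have h := hSrec 1
    norm_num at h
    rw [hS0, hS1] at h
    linear_combination h
  -- power formula
  have hpow : ∀ (V : Matrix (Fin 2) (Fin 2) ℂ), V * V = z • V - 1 →
      ∀ k : ℕ, V ^ (k+1) = S (k : ℤ) • V - S ((k : ℤ) - 1) • 1 := by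
    intro V hV k
    induction k with
    | zero =>
      norm_num [hS0, hSm1]
    | succ k ih =>
      have hrec := hSrec ((k : ℤ) + 1)
      have e1 : ((k : ℤ) + 1 - 1) = (k : ℤ) := by ring
      have e2 : ((k : ℤ) + 1 - 2) = (k : ℤ) - 1 := by ring
      rw [e1, e2] at hrec
      have e3 : (((k+1 : ℕ)) : ℤ) = (k : ℤ) + 1 := by push_cast; ring
      calc V ^ (k+1+1) = (S (k : ℤ) • V - S ((k : ℤ) - 1) • 1) * V := by
            rw [pow_succ, ih]
        _ = S (((k+1:ℕ)) : ℤ) • V - S ((((k+1:ℕ)) : ℤ) - 1) • 1 := by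
            rw [e3, hrec, e1, sub_mul, smul_mul_assoc, smul_mul_assoc, one_mul,
              hV, smul_sub, smul_smul, sub_smul, mul_comm (S (k:ℤ)) z]
            abel
  -- Chebyshev norm identity
  have hnorm : ∀ k : ℕ, S (k : ℤ)^2 + S ((k : ℤ) - 1)^2
      - z * S (k : ℤ) * S ((k : ℤ) - 1) = 1 := by
    intro k
    induction k with
    | zero =>
      norm_num [hS0, hSm1]
    | succ k ih =>
      have hrec := hSrec ((k : ℤ) + 1)
      have e1 : ((k : ℤ) + 1 - 1) = (k : ℤ) := by ring
      have e2 : ((k : ℤ) + 1 - 2) = (k : ℤ) - 1 := by ring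
      rw [e1, e2] at hrec
      have e3 : (((k+1 : ℕ)) : ℤ) = (k : ℤ) + 1 := by push_cast; ring
      rw [e3, e1]
      linear_combination ih + (S ((k:ℤ)+1) - S ((k:ℤ)-1)) * hrec
  -- set n = m + 1
  obtain ⟨m, rfl⟩ : ∃ m, n = m + 1 := ⟨n - 1, (Nat.succ_pred_eq_of_pos hn).symm⟩
  have ecast1 : (((m+1 : ℕ)) : ℤ) - 1 = (m : ℤ) := by push_cast; ring
  have ecast2 : (((m+1 : ℕ)) : ℤ) - 2 = (m : ℤ) - 1 := by push_cast; ring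
  have ecast3 : (((m+1 : ℕ)) : ℤ) = (m : ℤ) + 1 := by push_cast; ring
  rw [ecast1, ecast3] at hRiley
  set a := S (m : ℤ) with ha
  set b := S ((m : ℤ) - 1) with hbdef
  -- recurrence at n
  have hSn : S ((m : ℤ) + 1) = z * a - b := by
    have hrec := hSrec ((m : ℤ) + 1)
    have e1 : ((m : ℤ) + 1 - 1) = (m : ℤ) := by ring
    have e2 : ((m : ℤ) + 1 - 2) = (m : ℤ) - 1 := by ring
    rw [e1, e2] at hrec
    exact hrec
  -- Riley gives b = g * a with g = s^2 + s⁻¹^2 - u - 1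
  have hb : b = (s^2 + s⁻¹^2 - u - 1) * a := by
    rw [hSn] at hRiley
    linear_combination -hRiley + a * hz
  -- norm identity at m
  have hab : a^2 + b^2 - z * a * b = 1 := hnorm m
  have ha2 : a^2 * (1 + (s^2 + s⁻¹^2 - u - 1)^2 - z * (s^2 + s⁻¹^2 - u - 1)) = 1 := by
    linear_combination hab + (z * a - b - (s^2 + s⁻¹^2 - u - 1) * a) * hb
  -- trace of L
  have hLtr : L.trace = a^2 *
      ((1 + 2*u + u^2 - s^2*u)*(1 - s^2*u) + (s - s⁻¹ - u*s⁻¹)*(s*u*(u+1) - u*s⁻¹)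
        + (u*s⁻¹ - s*u + u^2*s⁻¹)*(s⁻¹ - s*u - s)
        + (1 - u*s⁻¹^2)*(u*(u+1) - u*s⁻¹^2 + u + 1)
        - 2*z*(s^2 + s⁻¹^2 - u - 1) + 2*(s^2 + s⁻¹^2 - u - 1)^2) := by
    rw [hL, hpow W hWsq m, hpow W' hW'sq m, hWe, hW'e]
    simp only [Matrix.trace_fin_two, Matrix.mul_apply, Fin.sum_univ_two,
      Matrix.smul_apply, Matrix.sub_apply, Matrix.one_apply, smul_eq_mul,
      Matrix.cons_val', Matrix.cons_val_zero, Matrix.cons_val_one,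
      Matrix.head_cons, Matrix.head_fin_const, Matrix.empty_val',
      Matrix.cons_val_fin_one]
    norm_num
    linear_combination (2*b + 2*(s^2 + s⁻¹^2 - u - 1)*a - 2*z*a) * hb + (2*a*b) * hz
  -- key scalar identity
  have hMDK : ((1 + 2*u + u^2 - s^2*u)*(1 - s^2*u) + (s - s⁻¹ - u*s⁻¹)*(s*u*(u+1) - u*s⁻¹)
        + (u*s⁻¹ - s*u + u^2*s⁻¹)*(s⁻¹ - s*u - s)
        + (1 - u*s⁻¹^2)*(u*(u+1) - u*s⁻¹^2 + u + 1)
        - 2*z*(s^2 + s⁻¹^2 - u - 1) + 2*(s^2 + s⁻¹^2 - u - 1)^2)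
      * ((u+1)*(x^2-4) - u^2)
      = (1 + (s^2 + s⁻¹^2 - u - 1)^2 - z * (s^2 + s⁻¹^2 - u - 1))
      * (2*((u+1)*(x^2-4) - u^2) + x^2*u^2) := by
    have hst : s * s⁻¹ = 1 := mul_inv_cancel₀ hs
    rw [hz, hx]
    linear_combination ((16:ℂ)*u + (24:ℂ)*u^2 + (12:ℂ)*u^3 + (2:ℂ)*u^4 + (-4:ℂ)*s⁻¹^2*u + (-2:ℂ)*s⁻¹^2*u^2 + (-8:ℂ)*s*s⁻¹*u + (-12:ℂ)*s*s⁻¹*u^2 + (-8:ℂ)*s*s⁻¹*u^3 + (-2:ℂ)*s*s⁻¹*u^4 + (-2:ℂ)*s*s⁻¹^3*u^2 + (-2:ℂ)*s*s⁻¹^3*u^3 + (-4:ℂ)*s^2*u + (-2:ℂ)*s^2*u^2 + (-4:ℂ)*s^2*s⁻¹^2*u^2 + (-4:ℂ)*s^2*s⁻¹^2*u^3 + (-2:ℂ)*s^3*s⁻¹*u^2 + (-2:ℂ)*s^3*s⁻¹*u^3) * hst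
  have hD : ((u+1)*(x^2-4) - u^2) * (L.trace - 2) = x^2 * u^2 := by
    rw [hLtr]
    linear_combination a^2 * hMDK + (2*((u+1)*(x^2-4) - u^2) + x^2*u^2) * ha2
  have hne : L.trace ≠ 2 := by
    intro h
    have h0 : (0:ℂ) = x^2 * u^2 := by rw [← hD, h]; ring
    exact mul_ne_zero (pow_ne_zero 2 hx0) (pow_ne_zero 2 hu) h0.symm
  refine ⟨hne, ?_⟩
  have h2T : 2 - L.trace ≠ 0 := sub_ne_zero.mpr (Ne.symm hne)
  have huv : u * u⁻¹ = 1 := mul_inv_cancel₀ hu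
  have hxw : x * x⁻¹ = 1 := mul_inv_cancel₀ hx0
  have hC : (u⁻¹^2*(u+1)*(x^2-4) - 1) * (2 - L.trace) = -x^2 := by
    linear_combination (-(u⁻¹^2)) * hD + (u*u⁻¹+1)*(2 - L.trace - x^2) * huv
  rw [ecast1, ecast2, div_eq_iff h2T]
  linear_combination
    (-(((x-2)*(P (m:ℤ) + P ((m:ℤ)-1)) - x*a) * x⁻¹^2)) * hC
    + (((x-2)*(P (m:ℤ) + P ((m:ℤ)-1)) - x*a) * (x*x⁻¹+1)) * hxw
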